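/- Let K/ℚ_p be a finite extension with ring of integers A, ramification degree e, residue degree f, and uniformizer π. Let n be a positive integer, write n = q·e + r with 0 ≤ r < e. Then there is an isomorphism of abelian groups A/π^n ≅ (ℤ/p^{q+1})^{⊕ f·r} ⊕ (ℤ/p^{q})^{⊕ f·(e−r)}. -/

import Mathlib

lemma aux_card {A : Type} [CommRing A] [IsDomain A] (π : A) (hπ0 : π ≠ 0) (m : ℕ) :
    Nat.card (A ⧸ Ideal.span {π ^ m}) = (Nat.card (A ⧸ Ideal.span {π})) ^ m := by
  induction m with
  | zero =>
    have h : Subsingleton (A ⧸ Ideal.span {π ^ 0}) := by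
      rw [Ideal.Quotient.subsingleton_iff]
      rw [pow_zero, Ideal.span_singleton_one]
    conv_rhs => rw [pow_zero]
    exact Nat.card_eq_one_iff_unique.mpr ⟨h, ⟨0⟩⟩
  | succ m ih =>
    set G := A ⧸ Ideal.span {π ^ (m + 1)}
    let mk' : A →+ G := (Ideal.Quotient.mk (Ideal.span {π ^ (m + 1)})).toAddMonoidHom
    let φ : A →+ G := mk'.comp (AddMonoidHom.mulLeft (π ^ m))
    -- kernel of φ is span {π}
    have hker : φ.ker = (Ideal.span {π}).toAddSubgroup := by
      ext a
      simp only [AddMonoidHom.mem_ker, AddMonoidHom.comp_apply, Submodule.mem_toAddSubgroup, Ideal.mem_span_singleton]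
      constructor
      · intro h
        have h2 : π ^ m * a ∈ Ideal.span {π ^ (m + 1)} := by
          rwa [← Ideal.Quotient.eq_zero_iff_mem]
        rw [Ideal.mem_span_singleton] at h2
        obtain ⟨b, hb⟩ := h2
        refine ⟨b, ?_⟩
        have : π ^ m * a = π ^ m * (π * b) := by rw [hb]; ring
        exact mul_left_cancel₀ (pow_ne_zero m hπ0) this
      · rintro ⟨b, rfl⟩
        show Ideal.Quotient.mk _ (π ^ m * (π * b)) = 0
        rw [Ideal.Quotient.eq_zero_iff_mem, Ideal.mem_span_singleton]
        exact ⟨b, by ring⟩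
    -- factor map
    have hle : Ideal.span {π ^ (m + 1)} ≤ Ideal.span {π ^ m} := by
      rw [Ideal.span_singleton_le_span_singleton]
      exact pow_dvd_pow π (Nat.le_succ m)
    let ρ : G →+ A ⧸ Ideal.span {π ^ m} :=
      (Ideal.Quotient.factor hle).toAddMonoidHom
    have hρs : Function.Surjective ρ := by
      intro y
      obtain ⟨a, rfl⟩ := Ideal.Quotient.mk_surjective y
      exact ⟨Ideal.Quotient.mk _ a, Ideal.Quotient.factor_mk hle a⟩
    have hkerρ : ρ.ker = φ.range := by
      ext y
      obtain ⟨a, rfl⟩ := Ideal.Quotient.mk_surjective y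
      simp only [AddMonoidHom.mem_ker, AddMonoidHom.mem_range]
      constructor
      · intro h
        have : Ideal.Quotient.mk (Ideal.span {π ^ m}) a = 0 := by
          rw [← Ideal.Quotient.factor_mk hle a]; exact h
        rw [Ideal.Quotient.eq_zero_iff_mem, Ideal.mem_span_singleton] at this
        obtain ⟨b, rfl⟩ := this
        exact ⟨b, rfl⟩
      · rintro ⟨b, hb⟩
        show (Ideal.Quotient.factor hle) (Ideal.Quotient.mk _ a) = 0
        rw [Ideal.Quotient.factor_mk hle a, Ideal.Quotient.eq_zero_iff_mem,
          Ideal.mem_span_singleton]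
        have : a - π ^ m * b ∈ Ideal.span {π ^ (m + 1)} := by
          rw [← Ideal.Quotient.eq]
          exact hb.symm
        rw [Ideal.mem_span_singleton] at this
        obtain ⟨d, hd⟩ := this
        exact ⟨b + π * d, by rw [pow_succ] at hd; linear_combination hd⟩
    have h1 : Nat.card G = Nat.card (G ⧸ φ.range) * Nat.card φ.range :=
      AddSubgroup.card_eq_card_quotient_mul_card_addSubgroup _
    have h2 : Nat.card φ.range = Nat.card (A ⧸ Ideal.span {π}) := by
      rw [← Nat.card_congr (QuotientAddGroup.quotientKerEquivRange φ).toEquiv, hker]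
      rfl
    have h3 : Nat.card (G ⧸ φ.range) = Nat.card (A ⧸ Ideal.span {π ^ m}) := by
      rw [← hkerρ]
      exact Nat.card_congr (QuotientAddGroup.quotientKerEquivOfSurjective ρ hρs).toEquiv
    rw [h1, h2, h3, ih, pow_succ]

lemma aux_span {A : Type} [CommRing A] (π : A) {e : ℕ} (he1 : 1 ≤ e) {c : A}
    (hc : IsUnit c) {p : ℕ} (hpc : (p : A) = π ^ e * c) {f : ℕ} (x : Fin f → A)
    (hx : ∀ a : A, ∃ s ∈ AddSubgroup.closure (Set.range x), a - s ∈ Ideal.span {π})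
    (n : ℕ) (a : A) :
    a ∈ AddSubgroup.closure
        (Set.range fun ij : Fin e × Fin f => x ij.2 * π ^ (ij.1 : ℕ)) ⊔
      (Ideal.span {π ^ n}).toAddSubgroup := by
  obtain ⟨e', rfl⟩ : ∃ e', e = e' + 1 := ⟨e - 1, by omega⟩
  induction n generalizing a with
  | zero =>
    apply AddSubgroup.mem_sup_right
    rw [Submodule.mem_toAddSubgroup, Ideal.mem_span_singleton, pow_zero]
    exact one_dvd a
  | succ n ih =>
    set M := AddSubgroup.closure
      (Set.range fun ij : Fin (e' + 1) × Fin f => x ij.2 * π ^ (ij.1 : ℕ)) with hM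
    have hM0 : AddSubgroup.closure (Set.range x) ≤ M := by
      rw [AddSubgroup.closure_le]
      rintro _ ⟨j, rfl⟩
      apply AddSubgroup.subset_closure
      exact ⟨(⟨0, Nat.succ_pos e'⟩, j), by simp⟩
    have hmul : ∀ t ∈ M, π * t ∈ M ⊔ (Ideal.span {π ^ (n + 1)}).toAddSubgroup := by
      have hcl : M ≤ AddSubgroup.comap (AddMonoidHom.mulLeft π)
          (M ⊔ (Ideal.span {π ^ (n + 1)}).toAddSubgroup) := by
        rw [hM, AddSubgroup.closure_le]
        rintro _ ⟨⟨i, j⟩, rfl⟩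
        simp only [Set.mem_preimage, SetLike.mem_coe, AddSubgroup.mem_comap,
          AddMonoidHom.coe_mulLeft]
        by_cases hie : (i : ℕ) + 1 < e' + 1
        · apply AddSubgroup.mem_sup_left
          apply AddSubgroup.subset_closure
          exact ⟨(⟨(i : ℕ) + 1, hie⟩, j), by show x j * π ^ ((i : ℕ) + 1) = _; ring⟩
        · have hie' : (i : ℕ) + 1 = e' + 1 := le_antisymm i.2 (not_lt.mp hie)
          obtain ⟨u, hu⟩ := hc.exists_right_inv
          obtain ⟨t', ht', w', hw', hsum⟩ := AddSubgroup.mem_sup.mp (ih (u * x j))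
          have h1 : π * (x j * π ^ (i : ℕ)) = π ^ (e' + 1) * x j := by
            have hp2 : π ^ (e' + 1) = π ^ ((i : ℕ) + 1) := by rw [hie']
            rw [hp2, pow_succ]; ring
          have h2 : π ^ (e' + 1) * x j = π ^ (e' + 1) * c * (u * x j) := by
            rw [show π ^ (e' + 1) * c * (u * x j) = π ^ (e' + 1) * (c * u) * x j
              from by ring, hu, mul_one]
          have key : π * (x j * π ^ (i : ℕ)) = (p : A) * t' + (p : A) * w' := by
            rw [h1, h2, ← hsum, hpc]; ring
          rw [key]
          apply add_mem
          · apply AddSubgroup.mem_sup_left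
            have hns : (p : A) * t' = p • t' := by rw [nsmul_eq_mul]
            rw [hns]
            exact AddSubgroup.nsmul_mem M ht' p
          · apply AddSubgroup.mem_sup_right
            rw [Submodule.mem_toAddSubgroup, Ideal.mem_span_singleton] at hw' ⊢
            obtain ⟨d, hd⟩ := hw'
            exact ⟨π ^ e' * c * d, by rw [hpc, hd]; ring⟩
      intro t ht
      exact hcl ht
    obtain ⟨s₀, hs₀, hss⟩ := hx a
    rw [Ideal.mem_span_singleton] at hss
    obtain ⟨b₁, hb₁⟩ := hss
    obtain ⟨t, ht, w, hw, hsum⟩ := AddSubgroup.mem_sup.mp (ih b₁)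
    have ha : a = s₀ + π * t + π * w := by
      have h3 : a = s₀ + π * b₁ := by linear_combination hb₁
      rw [h3, ← hsum]; ring
    rw [ha]
    apply add_mem
    apply add_mem
    · exact AddSubgroup.mem_sup_left (hM0 hs₀)
    · exact hmul t ht
    · apply AddSubgroup.mem_sup_right
      rw [Submodule.mem_toAddSubgroup, Ideal.mem_span_singleton] at hw ⊢
      obtain ⟨d, hd⟩ := hw
      exact ⟨d, by rw [hd]; ring⟩

lemma aux_gen (F : Type) [Field F] [Finite F] {k : Type} [AddCommGroup k] [Finite k]
    [Module F k] (f : ℕ) (hcard : Nat.card k = (Nat.card F) ^ f)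
    (hsm : ∀ (c : F) (w : k), ∃ m : ℕ, c • w = m • w) :
    ∃ b : Fin f → k, ∀ v : k, v ∈ AddSubgroup.closure (Set.range b) := by
  haveI : Module.Finite F k := Module.Finite.of_finite
  have hF2 : 2 ≤ Nat.card F := Finite.one_lt_card_iff_nontrivial.mpr inferInstance
  have hfr : Module.finrank F k = f := by
    haveI : Fintype k := Fintype.ofFinite k
    haveI : Fintype F := Fintype.ofFinite F
    have h1 : Fintype.card k = (Fintype.card F) ^ Module.finrank F k := Module.card_eq_pow_finrank
    rw [← Nat.card_eq_fintype_card, ← Nat.card_eq_fintype_card, hcard] at h1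
    exact Nat.pow_right_injective hF2 h1.symm
  let b := Module.finBasisOfFinrankEq F k hfr
  refine ⟨⇑b, fun v => ?_⟩
  rw [← b.sum_repr v]
  apply sum_mem
  intro j _
  obtain ⟨m, hm⟩ := hsm (b.repr v j) (b j)
  rw [hm]
  exact AddSubgroup.nsmul_mem _ (AddSubgroup.subset_closure (Set.mem_range_self j)) _


/-- Let `A` be the ring of integers of a finite extension `K/ℚ_p` (here: a complete
discrete valuation ring with uniformizer `π`) with ramification degree `e` (so `π^e ∥ p`)
and residue degree `f` (so `|A/π| = p^f`). Let `n` be a positive integer, written as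
`n = q·e + r` with `0 ≤ r < e`. Then, as abelian groups,
`A/π^n ≅ (ℤ/p^{q+1})^{⊕ f·r} ⊕ (ℤ/p^q)^{⊕ f·(e−r)}`. -/
theorem stmt_14 {A : Type} [CommRing A] [IsDomain A] (π : A) (hπ0 : π ≠ 0)
    (hπu : ¬ IsUnit π) (hmax : ∀ a : A, a ∉ Ideal.span {π} → IsUnit a)
    [IsAdicComplete (Ideal.span {π}) A]
    (p e f : ℕ) (hp : p.Prime) (hf0 : 0 < f)
    (he : π ^ e ∣ (p : A) ∧ ¬ π ^ (e + 1) ∣ (p : A))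
    (hcard : Nat.card (A ⧸ Ideal.span {π}) = p ^ f)
    (n q r : ℕ) (hn : 0 < n) (hnqr : n = q * e + r) (hr : r < e) :
    Nonempty ((A ⧸ Ideal.span {π ^ n}) ≃+
      ((Fin (f * r) → ZMod (p ^ (q + 1))) × (Fin (f * (e - r)) → ZMod (p ^ q)))) := by
  haveI := Fact.mk hp
  haveI : NeZero p := ⟨hp.ne_zero⟩
  set k := A ⧸ Ideal.span {π} with hk
  haveI hfin : Finite k := Nat.finite_of_card_ne_zero (by rw [hcard]; exact (pow_pos hp.pos f).ne')
  have hpf2 : 2 ≤ p ^ f := by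
    calc 2 ≤ p := hp.two_le
    _ = p ^ 1 := (pow_one p).symm
    _ ≤ p ^ f := Nat.pow_le_pow_right hp.pos hf0
  -- e ≥ 1
  have he1 : 1 ≤ e := by
    by_contra h
    have he0 : e = 0 := by omega
    have hnd : ¬ π ∣ (p : A) := by simpa [he0] using he.2
    have hpu : IsUnit ((p : A)) := hmax _ (by rwa [Ideal.mem_span_singleton])
    have hpk : IsUnit ((p : k)) := by
      have := hpu.map (Ideal.Quotient.mk (Ideal.span {π}))
      simpa using this
    have hzero : ((p : k)) ^ f = 0 := by
      have h0 : Nat.card k • (1 : k) = 0 := card_nsmul_eq_zero'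
      rw [hcard, nsmul_eq_mul, mul_one] at h0
      rw [← Nat.cast_pow]
      exact h0
    have h01 : (0 : k) = 1 := isUnit_zero_iff.mp (hzero ▸ hpk.pow f)
    haveI : Subsingleton k := subsingleton_of_zero_eq_one h01
    have : Nat.card k = 1 := Nat.card_eq_one_iff_unique.mpr ⟨this, ⟨0⟩⟩
    omega
  -- p = π^e * c with c a unit
  obtain ⟨c, hpc⟩ := he.1
  have hcu : IsUnit c := by
    by_contra hcu
    apply he.2
    have : c ∈ Ideal.span {π} := by
      by_contra hmem
      exact hcu (hmax c hmem)
    rw [Ideal.mem_span_singleton] at this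
    obtain ⟨d, rfl⟩ := this
    exact ⟨d, by rw [hpc]; ring⟩
  -- k is a ZMod p module
  have hsmul : ∀ z : k, p • z = 0 := by
    intro z
    have hπp : (p : k) = 0 := by
      rw [show ((p : ℕ) : k) = Ideal.Quotient.mk (Ideal.span {π}) ((p : A)) from
        (map_natCast (Ideal.Quotient.mk (Ideal.span {π})) p).symm,
        Ideal.Quotient.eq_zero_iff_mem, Ideal.mem_span_singleton, hpc]
      exact Dvd.dvd.mul_right (dvd_pow_self π (by omega)) c
    rw [nsmul_eq_mul, hπp, zero_mul]
  letI iMod : Module (ZMod p) k := AddCommGroup.zmodModule hsmul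
  have hsm : ∀ (cc : ZMod p) (w : k), ∃ m : ℕ, cc • w = m • w := fun cc w =>
    ⟨cc.val, by rw [← Nat.cast_smul_eq_nsmul (ZMod p), ZMod.natCast_val, ZMod.cast_id]⟩
  obtain ⟨b, hb⟩ := aux_gen (ZMod p) f (by rw [Nat.card_zmod]; exact hcard) hsm
  -- lift the generators to A
  have hxch : ∀ j : Fin f, ∃ a : A, Ideal.Quotient.mk (Ideal.span {π}) a = b j := fun j =>
    Ideal.Quotient.mk_surjective (b j)
  choose x hxmk using hxch
  have hx : ∀ a : A, ∃ s ∈ AddSubgroup.closure (Set.range x), a - s ∈ Ideal.span {π} := by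
    intro a
    have h1 : (Ideal.Quotient.mk (Ideal.span {π}) a) ∈
        AddSubgroup.map (Ideal.Quotient.mk (Ideal.span {π})).toAddMonoidHom
          (AddSubgroup.closure (Set.range x)) := by
      rw [AddMonoidHom.map_closure]
      have hcomp : ⇑(Ideal.Quotient.mk (Ideal.span {π})).toAddMonoidHom ∘ x = b :=
        funext hxmk
      have himg : ⇑(Ideal.Quotient.mk (Ideal.span {π})).toAddMonoidHom '' Set.range x
          = Set.range b := by
        rw [← Set.range_comp, hcomp]
      rw [himg]
      exact hb _
    obtain ⟨s, hs, hmk⟩ := h1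
    refine ⟨s, hs, ?_⟩
    rw [← Ideal.Quotient.eq]
    exact hmk.symm
  -- the homomorphism
  set I := Ideal.span {π ^ n} with hI
  let mkn : A →+ A ⧸ I := (Ideal.Quotient.mk I).toAddMonoidHom
  have hmkn : ∀ a : A, a ∈ I → mkn a = 0 := fun a ha => Ideal.Quotient.eq_zero_iff_mem.mpr ha
  have hjf : ∀ m : ℕ, m % f < f := fun m => Nat.mod_lt _ hf0
  let g : Fin (f * r) → A := fun m => x ⟨(m : ℕ) % f, hjf m⟩ * π ^ ((m : ℕ) / f)
  let h : Fin (f * (e - r)) → A := fun m => x ⟨(m : ℕ) % f, hjf m⟩ * π ^ (r + (m : ℕ) / f)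
  have hgz : ∀ m, ((p ^ (q + 1) : ℕ) : ℤ) • mkn (g m) = 0 := by
    intro m
    rw [natCast_zsmul, ← map_nsmul]
    apply hmkn
    rw [hI, nsmul_eq_mul, Nat.cast_pow, Ideal.mem_span_singleton]
    have hkey : ((p : A)) ^ (q + 1) * g m
        = π ^ (e * (q + 1) + (m : ℕ) / f) * (c ^ (q + 1) * x ⟨(m : ℕ) % f, hjf m⟩) := by
      show ((p : A)) ^ (q + 1) * (x ⟨(m : ℕ) % f, hjf m⟩ * π ^ ((m : ℕ) / f)) = _
      rw [hpc]; ring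
    rw [hkey]
    have hle : n ≤ e * (q + 1) + (m : ℕ) / f := by
      calc n = q * e + r := hnqr
      _ ≤ q * e + e := by omega
      _ = e * (q + 1) := by ring
      _ ≤ e * (q + 1) + (m : ℕ) / f := Nat.le_add_right _ _
    exact Dvd.dvd.mul_right (pow_dvd_pow π hle) _
  have hhz : ∀ m, ((p ^ q : ℕ) : ℤ) • mkn (h m) = 0 := by
    intro m
    rw [natCast_zsmul, ← map_nsmul]
    apply hmkn
    rw [hI, nsmul_eq_mul, Nat.cast_pow, Ideal.mem_span_singleton]
    have hkey : ((p : A)) ^ q * h m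
        = π ^ (e * q + (r + (m : ℕ) / f)) * (c ^ q * x ⟨(m : ℕ) % f, hjf m⟩) := by
      show ((p : A)) ^ q * (x ⟨(m : ℕ) % f, hjf m⟩ * π ^ (r + (m : ℕ) / f)) = _
      rw [hpc]; ring
    rw [hkey]
    have hle : n ≤ e * q + (r + (m : ℕ) / f) := by
      rw [mul_comm e q, hnqr]
      exact Nat.add_le_add_left (Nat.le_add_right _ _) _
    exact Dvd.dvd.mul_right (pow_dvd_pow π hle) _
  let Φ₁ : (Fin (f * r) → ZMod (p ^ (q + 1))) →+ A ⧸ I :=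
    ∑ m : Fin (f * r), (ZMod.lift (p ^ (q + 1)) ⟨(zmultiplesHom _) (mkn (g m)), hgz m⟩).comp
      (Pi.evalAddMonoidHom (fun _ => ZMod (p ^ (q + 1))) m)
  let Φ₂ : (Fin (f * (e - r)) → ZMod (p ^ q)) →+ A ⧸ I :=
    ∑ m : Fin (f * (e - r)), (ZMod.lift (p ^ q) ⟨(zmultiplesHom _) (mkn (h m)), hhz m⟩).comp
      (Pi.evalAddMonoidHom (fun _ => ZMod (p ^ q)) m)
  let Φ : ((Fin (f * r) → ZMod (p ^ (q + 1))) × (Fin (f * (e - r)) → ZMod (p ^ q))) →+ A ⧸ I :=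
    Φ₁.coprod Φ₂
  have hΦ1 : ∀ m, Φ₁ (Pi.single m 1) = mkn (g m) := by
    intro m
    show (∑ m' : Fin (f * r), (ZMod.lift (p ^ (q + 1))
        ⟨(zmultiplesHom _) (mkn (g m')), hgz m'⟩).comp
        (Pi.evalAddMonoidHom (fun _ => ZMod (p ^ (q + 1))) m')) (Pi.single m 1) = mkn (g m)
    rw [AddMonoidHom.finset_sum_apply]
    rw [Finset.sum_eq_single m]
    · simp only [AddMonoidHom.comp_apply, Pi.evalAddMonoidHom_apply, Pi.single_eq_same]
      rw [show (1 : ZMod (p ^ (q + 1))) = ((1 : ℤ) : ZMod (p ^ (q + 1))) by norm_cast,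
        ZMod.lift_coe]
      show (1 : ℤ) • mkn (g m) = mkn (g m)
      rw [one_zsmul]
    · intro m' _ hne
      simp only [AddMonoidHom.comp_apply, Pi.evalAddMonoidHom_apply,
        Pi.single_eq_of_ne hne, map_zero]
    · intro hnm
      exact absurd (Finset.mem_univ m) hnm
  have hΦ2 : ∀ m, Φ₂ (Pi.single m 1) = mkn (h m) := by
    intro m
    show (∑ m' : Fin (f * (e - r)), (ZMod.lift (p ^ q)
        ⟨(zmultiplesHom _) (mkn (h m')), hhz m'⟩).comp
        (Pi.evalAddMonoidHom (fun _ => ZMod (p ^ q)) m')) (Pi.single m 1) = mkn (h m)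
    rw [AddMonoidHom.finset_sum_apply]
    rw [Finset.sum_eq_single m]
    · simp only [AddMonoidHom.comp_apply, Pi.evalAddMonoidHom_apply, Pi.single_eq_same]
      rw [show (1 : ZMod (p ^ q)) = ((1 : ℤ) : ZMod (p ^ q)) by norm_cast, ZMod.lift_coe]
      show (1 : ℤ) • mkn (h m) = mkn (h m)
      rw [one_zsmul]
    · intro m' _ hne
      simp only [AddMonoidHom.comp_apply, Pi.evalAddMonoidHom_apply,
        Pi.single_eq_of_ne hne, map_zero]
    · intro hnm
      exact absurd (Finset.mem_univ m) hnm
  have hΦg : ∀ m, Φ (Pi.single m 1, 0) = mkn (g m) := by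
    intro m
    show Φ₁ (Pi.single m 1) + Φ₂ 0 = mkn (g m)
    rw [map_zero, add_zero, hΦ1]
  have hΦh : ∀ m, Φ (0, Pi.single m 1) = mkn (h m) := by
    intro m
    show Φ₁ 0 + Φ₂ (Pi.single m 1) = mkn (h m)
    rw [map_zero, zero_add, hΦ2]
  -- all monomials x j * π ^ i are reached
  have hreach : ∀ (i : ℕ), i < e → ∀ (j : Fin f), mkn (x j * π ^ i) ∈ Φ.range := by
    intro i hi j
    by_cases hir : i < r
    · have hb1 : (j : ℕ) + i * f < f * r := by
        calc (j : ℕ) + i * f < f + i * f := by omega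
        _ = (i + 1) * f := by ring
        _ ≤ r * f := Nat.mul_le_mul_right f (by omega)
        _ = f * r := by ring
      refine ⟨(Pi.single ⟨(j : ℕ) + i * f, hb1⟩ 1, 0), ?_⟩
      rw [hΦg]
      have h1 : ((j : ℕ) + i * f) % f = (j : ℕ) := by
        rw [Nat.add_mul_mod_self_right, Nat.mod_eq_of_lt j.2]
      have h2 : ((j : ℕ) + i * f) / f = i := by
        rw [Nat.add_mul_div_right _ _ hf0, Nat.div_eq_of_lt j.2, zero_add]
      have h4 : g ⟨(j : ℕ) + i * f, hb1⟩ = x j * π ^ i := by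
        show x ⟨((j : ℕ) + i * f) % f, hjf _⟩ * π ^ (((j : ℕ) + i * f) / f) = x j * π ^ i
        rw [h2]
        exact congrArg (· * π ^ i) (congrArg x (Fin.ext h1))
      rw [h4]
    · have hb2 : (j : ℕ) + (i - r) * f < f * (e - r) := by
        calc (j : ℕ) + (i - r) * f < f + (i - r) * f := by omega
        _ = ((i - r) + 1) * f := by ring
        _ ≤ (e - r) * f := Nat.mul_le_mul_right f (by omega)
        _ = f * (e - r) := by ring
      refine ⟨(0, Pi.single ⟨(j : ℕ) + (i - r) * f, hb2⟩ 1), ?_⟩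
      rw [hΦh]
      have h1 : ((j : ℕ) + (i - r) * f) % f = (j : ℕ) := by
        rw [Nat.add_mul_mod_self_right, Nat.mod_eq_of_lt j.2]
      have h2 : ((j : ℕ) + (i - r) * f) / f = i - r := by
        rw [Nat.add_mul_div_right _ _ hf0, Nat.div_eq_of_lt j.2, zero_add]
      have h4 : h ⟨(j : ℕ) + (i - r) * f, hb2⟩ = x j * π ^ i := by
        show x ⟨((j : ℕ) + (i - r) * f) % f, hjf _⟩
            * π ^ (r + ((j : ℕ) + (i - r) * f) / f) = x j * π ^ i
        rw [h2, show r + (i - r) = i by omega]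
        exact congrArg (· * π ^ i) (congrArg x (Fin.ext h1))
      rw [h4]
  -- surjectivity
  have hsurj : Function.Surjective Φ := by
    intro y
    obtain ⟨a, rfl⟩ := Ideal.Quotient.mk_surjective y
    obtain ⟨s, hs, w, hw, hsum⟩ := AddSubgroup.mem_sup.mp (aux_span π he1 hcu hpc x hx n a)
    have hmka : mkn a = mkn s := by
      rw [← hsum, map_add, hmkn w (by rwa [Submodule.mem_toAddSubgroup] at hw), add_zero]
    have hsr : mkn s ∈ Φ.range := by
      have hcl : AddSubgroup.closure
          (Set.range fun ij : Fin e × Fin f => x ij.2 * π ^ (ij.1 : ℕ))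
          ≤ AddSubgroup.comap mkn Φ.range := by
        rw [AddSubgroup.closure_le]
        rintro _ ⟨⟨i, j⟩, rfl⟩
        exact hreach i i.2 j
      exact hcl hs
    obtain ⟨v, hv⟩ := hsr
    exact ⟨v, by rw [hv]; exact hmka.symm⟩
  -- cardinalities agree
  haveI : NeZero (p ^ (q + 1)) := ⟨(pow_pos hp.pos _).ne'⟩
  haveI : NeZero (p ^ q) := ⟨(pow_pos hp.pos _).ne'⟩
  have hcards : Nat.card ((Fin (f * r) → ZMod (p ^ (q + 1)))
      × (Fin (f * (e - r)) → ZMod (p ^ q))) = Nat.card (A ⧸ I) := by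
    rw [Nat.card_prod, Nat.card_fun, Nat.card_fun, Nat.card_zmod, Nat.card_zmod]
    rw [hI, aux_card π hπ0 n, hcard]
    simp only [Nat.card_eq_fintype_card, Fintype.card_fin]
    obtain ⟨d, hd⟩ : ∃ d, e = r + d := ⟨e - r, by omega⟩
    have hd' : e - r = d := by omega
    rw [hd', hnqr, hd]
    rw [← pow_mul, ← pow_mul, ← pow_add, ← pow_mul]
    congr 1
    ring
  have hbij : Function.Bijective Φ :=
    (Nat.bijective_iff_surjective_and_card Φ).mpr ⟨hsurj, hcards⟩
  exact ⟨(AddEquiv.ofBijective Φ hbij).symm⟩
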